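/- arXiv:2006.02494 — 7 statements merged into one kernel-verified Lean document; each statement's English description precedes it below -/
import Mathlib

section
/- Existence of a Bhargava cube for a pair of quadratic forms: Let A₁,B₁,C₁,A₂,B₂,C₂ be integers with B₁² − 4A₁C₁ = B₂² − 4A₂C₂. Then there exists a 2×4 integer matrix M with rows (p₁,p₂,p₃,p₄) and (r₁,r₂,r₃,r₄) whose 2×2 minors M_{ij} = p_i r_j − p_j r_i satisfy: M₁₂ = −A₁, M₁₃ = −A₂, M₁₄ = −(B₁+B₂)/2, M₂₃ = (B₁−B₂)/2, M₂₄ = −C₂, M₃₄ = −C₁. (No primitivity or coprimality assumption on the two forms is needed.) -/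
/-- Existence of a Bhargava cube (presented via its 2×4 minor matrix) realizing any
pair of integral binary quadratic forms of equal discriminant. -/
theorem bhargava_cube_exists (A₁ B₁ C₁ A₂ B₂ C₂ : ℤ)
    (hdisc : B₁ ^ 2 - 4 * A₁ * C₁ = B₂ ^ 2 - 4 * A₂ * C₂) :
    ∃ p₁ p₂ p₃ p₄ r₁ r₂ r₃ r₄ : ℤ,
      p₁ * r₂ - p₂ * r₁ = -A₁ ∧
      p₁ * r₃ - p₃ * r₁ = -A₂ ∧
      p₁ * r₄ - p₄ * r₁ = -((B₁ + B₂) / 2) ∧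
      p₂ * r₃ - p₃ * r₂ = (B₁ - B₂) / 2 ∧
      p₂ * r₄ - p₄ * r₂ = -C₂ ∧
      p₃ * r₄ - p₄ * r₃ = -C₁ := by
  -- parity: B₁ ≡ B₂ (mod 2)
  obtain ⟨k, hk⟩ : ∃ k, B₁ = B₂ + 2 * k := by
    have he : Even ((B₁ - B₂) * (B₁ - B₂)) :=
      ⟨2 * (A₁ * C₁ - A₂ * C₂) - B₂ * (B₁ - B₂), by linear_combination hdisc⟩
    have h2 : Even (B₁ - B₂) := by rcases Int.even_mul.mp he with h | h <;> exact h
    obtain ⟨m, hm⟩ := h2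
    exact ⟨m, by omega⟩
  subst hk
  set n : ℤ := B₂ + k with hn
  have hdiv1 : (B₂ + 2 * k + B₂) / 2 = n := by omega
  have hdiv2 : (B₂ + 2 * k - B₂) / 2 = k := by omega
  rw [hdiv1, hdiv2]
  have hnk : n * k = A₁ * C₁ - A₂ * C₂ := by
    have h4 : (4 : ℤ) * (n * k) = 4 * (A₁ * C₁ - A₂ * C₂) := by
      rw [hn]; linear_combination hdisc
    exact mul_left_cancel₀ (by norm_num) h4
  by_cases hz : A₁ = 0 ∧ A₂ = 0 ∧ n = 0
  · obtain ⟨h1, h2, h3⟩ := hz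
    by_cases hkc : k = 0 ∧ C₂ = 0
    · exact ⟨0, 0, 1, 0, 0, 0, 0, -C₁, by simp [h1], by simp [h2], by simp [h3],
        by simp [hkc.1], by simp [hkc.2], by ring⟩
    · set h : ℤ := (Int.gcd k C₂ : ℤ) with hh
      have hh0 : h ≠ 0 := by
        simp only [hh, ne_eq, Int.natCast_eq_zero, Int.gcd_eq_zero_iff]
        tauto
      obtain ⟨k', hk'⟩ : h ∣ k := Int.gcd_dvd_left k C₂
      obtain ⟨c', hc'⟩ : h ∣ C₂ := Int.gcd_dvd_right k C₂
      set a := Int.gcdA k C₂ with ha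
      set b := Int.gcdB k C₂ with hb
      have hbez : h = k * a + C₂ * b := by rw [hh, ha, hb]; exact Int.gcd_eq_gcd_ab k C₂
      have h1' : k' * a + c' * b = 1 := by
        apply mul_left_cancel₀ hh0
        linear_combination -hbez - a * hk' - b * hc'
      refine ⟨0, h, C₁ * b, C₁ * a, 0, 0, k', -c', ?_, ?_, ?_, ?_, ?_, ?_⟩
      · linear_combination h1
      · linear_combination h2
      · linear_combination h3
      · linear_combination -hk'
      · linear_combination hc'
      · linear_combination -C₁ * h1'
  · set G : ℤ := (Int.gcd (Int.gcd A₁ A₂ : ℤ) n : ℤ) with hG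
    have hG0 : G ≠ 0 := by
      simp only [hG, ne_eq, Int.natCast_eq_zero, Int.gcd_eq_zero_iff,
        Int.natCast_eq_zero] at *
      tauto
    obtain ⟨a', e1⟩ : G ∣ A₁ :=
      dvd_trans (Int.gcd_dvd_left (Int.gcd A₁ A₂ : ℤ) n) (Int.gcd_dvd_left A₁ A₂)
    obtain ⟨b', e2⟩ : G ∣ A₂ :=
      dvd_trans (Int.gcd_dvd_left (Int.gcd A₁ A₂ : ℤ) n) (Int.gcd_dvd_right A₁ A₂)
    obtain ⟨n', e3⟩ : G ∣ n := Int.gcd_dvd_right (Int.gcd A₁ A₂ : ℤ) n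
    have hb1 : (Int.gcd A₁ A₂ : ℤ) = A₁ * Int.gcdA A₁ A₂ + A₂ * Int.gcdB A₁ A₂ :=
      Int.gcd_eq_gcd_ab A₁ A₂
    have hb2 : G = (Int.gcd A₁ A₂ : ℤ) * Int.gcdA (Int.gcd A₁ A₂ : ℤ) n
        + n * Int.gcdB (Int.gcd A₁ A₂ : ℤ) n := by
      rw [hG]; exact Int.gcd_eq_gcd_ab _ n
    set X : ℤ := Int.gcdA A₁ A₂ * Int.gcdA (Int.gcd A₁ A₂ : ℤ) n with hX
    set Y : ℤ := Int.gcdB A₁ A₂ * Int.gcdA (Int.gcd A₁ A₂ : ℤ) n with hY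
    set Z : ℤ := Int.gcdB (Int.gcd A₁ A₂ : ℤ) n with hZ
    have hGX : G = A₁ * X + A₂ * Y + n * Z := by
      rw [hX, hY, hZ]
      linear_combination hb2 + Int.gcdA (Int.gcd A₁ A₂ : ℤ) n * hb1
    have hu : a' * X + b' * Y + n' * Z = 1 := by
      apply mul_left_cancel₀ hG0
      linear_combination -hGX - X * e1 - Y * e2 - Z * e3
    have hc : a' * C₁ - b' * C₂ - n' * k = 0 := by
      apply mul_left_cancel₀ hG0
      linear_combination -hnk - C₁ * e1 + C₂ * e2 + k * e3
    refine ⟨0, a', b', n', G, C₂ * Z - k * Y, k * X + C₁ * Z, -C₁ * Y - C₂ * X,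
      ?_, ?_, ?_, ?_, ?_, ?_⟩
    · linear_combination e1
    · linear_combination e2
    · linear_combination e3
    · linear_combination k * hu + Z * hc
    · linear_combination -C₂ * hu - Y * hc
    · linear_combination -C₁ * hu + X * hc
end

section
/- Let a, d be positive integers and b an integer with 0 ≤ b ≤ d−1. Set e = gcd(b,d) (with gcd(0,d) = d), and let δ, β be any integers satisfying −δb + βd = e. Set d' = ad/e and let b' be the unique integer with 0 ≤ b' < d' and b' ≡ δa (mod d'). Then there exists S ∈ SL(2,ℤ) such that [[a,b],[0,d]] · [[0,−1],[1,0]] = S · [[e, b'],[0, d']]. (The residue b' mod d' does not depend on the choice of the solution (δ,β).) -/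
/-- Transformation of the upper-triangular orbit datum `(a,b,d)` under the order-4
automorphism `W₁ = [[0,−1],[1,0]]` of `x²+y²`: with `e = gcd(b,d)`,
`−δb + βd = e`, `d' = ad/e` and `b' ≡ δa (mod d')`, `0 ≤ b' < d'`, there is
`S ∈ SL(2,ℤ)` with `[[a,b],[0,d]]·W₁ = S·[[e,b'],[0,d']]`. -/
theorem orbit_datum_W1 (a b d : ℤ) (ha : 0 < a) (hd : 0 < d)
    (hb0 : 0 ≤ b) (hb1 : b ≤ d - 1)
    (e : ℤ) (he : e = Int.gcd b d)
    (δ β : ℤ) (hδβ : -δ * b + β * d = e)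
    (d' : ℤ) (hd' : d' = a * d / e)
    (b' : ℤ) (hb'0 : 0 ≤ b') (hb'1 : b' < d') (hb'2 : b' ≡ δ * a [ZMOD d']) :
    ∃ S : Matrix.SpecialLinearGroup (Fin 2) ℤ,
      !![a, b; 0, d] * !![0, -1; 1, 0]
        = (S : Matrix (Fin 2) (Fin 2) ℤ) * !![e, b'; 0, d'] := by
  have heb : e ∣ b := he ▸ Int.gcd_dvd_left b d
  have hed : e ∣ d := he ▸ Int.gcd_dvd_right b d
  have he0 : e ≠ 0 := by
    rintro rfl
    have := zero_dvd_iff.mp hed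
    omega
  obtain ⟨p, hp⟩ := heb
  obtain ⟨q, hq⟩ := hed
  have hd'' : d' = a * q := by
    rw [hd', hq, show a * (e * q) = e * (a * q) by ring,
      Int.mul_ediv_cancel_left _ he0]
  have hdvd : d' ∣ δ * a - b' := hb'2.dvd
  obtain ⟨k, hk⟩ := hdvd
  have hb'' : b' = δ * a - d' * k := by omega
  have hpq : -δ * p + β * q = 1 := by
    have h2 : e * (-δ * p + β * q) = e * 1 := by
      rw [hp, hq] at hδβ; linear_combination hδβ
    exact mul_left_cancel₀ he0 h2
  refine ⟨⟨!![p, -β + k * p; q, -δ + k * q], ?_⟩, ?_⟩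
  · simp [Matrix.det_fin_two_of]
    linear_combination hpq
  · ext i j
    fin_cases i <;> fin_cases j <;>
      simp [Matrix.mul_apply, Fin.sum_univ_two, hb'', hd'']
    · linear_combination hp
    · linear_combination a * hpq
    · linear_combination hq
    · ring
end

section
/- Bijection between Pell solutions and automorphisms: Let f(x,y) = Ax² + Bxy + Cy² be an integral binary quadratic form with gcd(A,B,C) = 1 and discriminant D = B² − 4AC < 0. For every pair of integers (p,q) with p² − Dq² = 4, the integers p − qB and p + qB are even, the matrix K(f,p,q) = [[(p−qB)/2, qA],[−qC, (p+qB)/2]] lies in SL(2,ℤ), and f((x,y)·K(f,p,q)) = f(x,y) for all integers x, y. Moreover, the map (p,q) ↦ K(f,p,q) is a bijection from the set of integer solutions of p² − Dq² = 4 onto Aut(f). -/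
/-- Bijection between solutions of the Pell equation `p² − Dq² = 4` and the proper
automorphism group of a primitive binary quadratic form `f = Ax²+Bxy+Cy²` of
negative discriminant `D = B²−4AC`: each solution `(p,q)` gives the matrix
`K(f,p,q) = [[(p−qB)/2, qA],[−qC,(p+qB)/2]] ∈ SL(2,ℤ)` leaving `f` invariant under
`(x,y) ↦ (x,y)K`, and this assignment is a bijection onto `Aut(f)`. -/
theorem pell_automorphism_bijection (A B C : ℤ)
    (hprim : Int.gcd A (Int.gcd B C) = 1)
    (hD : B ^ 2 - 4 * A * C < 0) :
    (∀ p q : ℤ, p ^ 2 - (B ^ 2 - 4 * A * C) * q ^ 2 = 4 →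
      2 ∣ (p - q * B) ∧ 2 ∣ (p + q * B) ∧
      (!![(p - q * B) / 2, q * A; -q * C, (p + q * B) / 2] :
        Matrix (Fin 2) (Fin 2) ℤ).det = 1 ∧
      (∀ x y : ℤ,
        A * ((p - q * B) / 2 * x + (-q * C) * y) ^ 2
          + B * ((p - q * B) / 2 * x + (-q * C) * y)
              * (q * A * x + (p + q * B) / 2 * y)
          + C * (q * A * x + (p + q * B) / 2 * y) ^ 2
        = A * x ^ 2 + B * x * y + C * y ^ 2)) ∧
    Set.BijOn
      (fun pq : ℤ × ℤ =>
        (!![(pq.1 - pq.2 * B) / 2, pq.2 * A; -pq.2 * C, (pq.1 + pq.2 * B) / 2] :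
          Matrix (Fin 2) (Fin 2) ℤ))
      {pq : ℤ × ℤ | pq.1 ^ 2 - (B ^ 2 - 4 * A * C) * pq.2 ^ 2 = 4}
      {K : Matrix (Fin 2) (Fin 2) ℤ | K.det = 1 ∧
        ∀ x y : ℤ,
          A * (K 0 0 * x + K 1 0 * y) ^ 2
            + B * (K 0 0 * x + K 1 0 * y) * (K 0 1 * x + K 1 1 * y)
            + C * (K 0 1 * x + K 1 1 * y) ^ 2
          = A * x ^ 2 + B * x * y + C * y ^ 2} := by
  have hA : A ≠ 0 := by
    rintro rfl
    nlinarith [sq_nonneg B]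
  have parity : ∀ p q : ℤ, p ^ 2 - (B ^ 2 - 4 * A * C) * q ^ 2 = 4 →
      2 ∣ (p - q * B) := by
    intro p q h
    have hprod : (2:ℤ) ∣ (p - q * B) * (p + q * B) := by
      refine ⟨2 - 2 * A * C * q ^ 2, ?_⟩
      linear_combination h
    rcases (Int.Prime.dvd_mul' Nat.prime_two hprod) with h' | h'
    · exact h'
    · obtain ⟨k, hk⟩ := h'
      exact ⟨k - q * B, by linear_combination hk⟩
  have main : ∀ p q : ℤ, p ^ 2 - (B ^ 2 - 4 * A * C) * q ^ 2 = 4 →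
      2 ∣ (p - q * B) ∧ 2 ∣ (p + q * B) ∧
      (!![(p - q * B) / 2, q * A; -q * C, (p + q * B) / 2] :
        Matrix (Fin 2) (Fin 2) ℤ).det = 1 ∧
      (∀ x y : ℤ,
        A * ((p - q * B) / 2 * x + (-q * C) * y) ^ 2
          + B * ((p - q * B) / 2 * x + (-q * C) * y)
              * (q * A * x + (p + q * B) / 2 * y)
          + C * (q * A * x + (p + q * B) / 2 * y) ^ 2
        = A * x ^ 2 + B * x * y + C * y ^ 2) := by
    intro p q h
    obtain ⟨s, hs⟩ := parity p q h
    have h1 : (p - q * B) / 2 = s := by omega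
    have h2 : (p + q * B) / 2 = s + q * B := by omega
    have hu : s ^ 2 + s * (q * B) + q ^ 2 * A * C = 1 := by
      have h4 : 4 * (s ^ 2 + s * (q * B) + q ^ 2 * A * C) = 4 * 1 := by
        linear_combination h - (2 * s + q * B + p) * hs
      exact mul_left_cancel₀ (by norm_num) h4
    refine ⟨⟨s, hs⟩, ⟨s + q * B, by omega⟩, ?_, ?_⟩
    · rw [Matrix.det_fin_two_of, h1, h2]
      linear_combination hu
    · intro x y
      rw [h1, h2]
      linear_combination (A * x ^ 2 + B * x * y + C * y ^ 2) * hu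
  refine ⟨main, ?_, ?_, ?_⟩
  · -- MapsTo
    rintro ⟨p, q⟩ hpq
    obtain ⟨-, -, hdet, hinv⟩ := main p q hpq
    refine ⟨hdet, ?_⟩
    intro x y
    simpa using hinv x y
  · -- InjOn
    rintro ⟨p₁, q₁⟩ h₁ ⟨p₂, q₂⟩ h₂ hEq
    simp only [Set.mem_setOf_eq] at h₁ h₂
    have e00 := congrFun (congrFun hEq 0) 0
    have e01 := congrFun (congrFun hEq 0) 1
    have e11 := congrFun (congrFun hEq 1) 1
    simp only [Matrix.cons_val', Matrix.cons_val_zero, Matrix.cons_val_one,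
      Matrix.head_cons, Matrix.empty_val', Matrix.cons_val_fin_one,
      Matrix.head_fin_const, Matrix.of_apply] at e00 e01 e11
    have hq : q₁ = q₂ := mul_right_cancel₀ hA e01
    subst hq
    obtain ⟨s₁, hs₁⟩ := parity p₁ q₁ h₁
    obtain ⟨s₂, hs₂⟩ := parity p₂ q₁ h₂
    have : p₁ = p₂ := by omega
    simp [this]
  · -- SurjOn
    rintro K ⟨hdet, hinv⟩
    set a := K 0 0 with ha
    set b := K 0 1 with hb
    set c := K 1 0 with hc
    set d := K 1 1 with hd
    have hdet' : a * d - b * c = 1 := by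
      rw [Matrix.det_fin_two] at hdet
      exact hdet
    have e1 : A * a ^ 2 + B * (a * b) + C * b ^ 2 = A := by
      linear_combination hinv 1 0
    have e2 : A * c ^ 2 + B * (c * d) + C * d ^ 2 = C := by
      linear_combination hinv 0 1
    have e3 : 2 * A * a * c + B * (a * d + b * c) + 2 * C * b * d = B := by
      linear_combination hinv 1 1 - hinv 1 0 - hinv 0 1
    have T1 : A * (d - a) = B * b := by
      have h2 : 2 * (A * (d - a)) = 2 * (B * b) := by
        linear_combination (-2 * d) * e1 + b * e3 + (2 * A * a + B * b) * hdet'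
      exact mul_left_cancel₀ (by norm_num) h2
    have T2 : A * c = -(C * b) := by
      have h2 : 2 * (A * c) = 2 * (-(C * b)) := by
        linear_combination d * e3 - 2 * b * e2 - (2 * A * c + B * d) * hdet'
      exact mul_left_cancel₀ (by norm_num) h2
    -- A divides b
    have hgBC : (Int.gcd B C : ℤ) = B * Int.gcdA B C + C * Int.gcdB B C :=
      Int.gcd_eq_gcd_ab B C
    have hgA : ((Int.gcd A (Int.gcd B C) : ℕ) : ℤ)
        = A * Int.gcdA A (Int.gcd B C) + (Int.gcd B C : ℤ) * Int.gcdB A (Int.gcd B C) :=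
      Int.gcd_eq_gcd_ab A (Int.gcd B C)
    have hone : (1 : ℤ) = A * Int.gcdA A (Int.gcd B C)
        + (B * Int.gcdA B C + C * Int.gcdB B C) * Int.gcdB A (Int.gcd B C) := by
      rw [← hgBC, ← hgA, hprim]
      norm_num
    have hdvdBb : A ∣ B * b := ⟨d - a, T1.symm⟩
    have hdvdCb : A ∣ C * b := ⟨-c, by linear_combination T2⟩
    have hdvdb : A ∣ b := by
      have hbeq : b = (Int.gcdA A (Int.gcd B C)) * (A * b)
          + (Int.gcdA B C * Int.gcdB A (Int.gcd B C)) * (B * b)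
          + (Int.gcdB B C * Int.gcdB A (Int.gcd B C)) * (C * b) := by
        linear_combination b * hone
      rw [hbeq]
      exact dvd_add (dvd_add (Dvd.dvd.mul_left (dvd_mul_right A b) _)
        (Dvd.dvd.mul_left hdvdBb _)) (Dvd.dvd.mul_left hdvdCb _)
    obtain ⟨q, hq⟩ := hdvdb
    have hcq : c = -(q * C) := by
      refine mul_left_cancel₀ hA ?_
      linear_combination T2 - C * hq
    have hda : d - a = q * B := by
      refine mul_left_cancel₀ hA ?_
      linear_combination T1 + B * hq
    refine ⟨(a + d, q), ?_, ?_⟩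
    · show (a + d) ^ 2 - (B ^ 2 - 4 * A * C) * q ^ 2 = 4
      have h4 : (a + d) ^ 2 - (B ^ 2 - 4 * A * C) * q ^ 2 = 4 := by
        linear_combination 4 * hdet' + (d - a + q * B) * hda + 4 * c * hq + 4 * A * q * hcq
      exact h4
    · show (!![((a + d) - q * B) / 2, q * A; -q * C, ((a + d) + q * B) / 2] :
        Matrix (Fin 2) (Fin 2) ℤ) = K
      have h00 : ((a + d) - q * B) / 2 = a := by rw [← hda]; omega
      have h11 : ((a + d) + q * B) / 2 = d := by rw [← hda]; omega
      ext i j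
      fin_cases i <;> fin_cases j <;>
        simp [h00, h11, ← ha, ← hb, ← hc, ← hd]
      · linear_combination -hq
      · linear_combination -hcq
end

section
/- Let f(x,y) = Ax² + Bxy + Cy² be a primitive integral binary quadratic form that is positive definite (A > 0 and D = B² − 4AC < 0). If D ≠ −3 and D ≠ −4, then Aut(f) = {I₂, −I₂}, i.e. the only matrices K ∈ SL(2,ℤ) with f((x,y)K) = f(x,y) for all x,y are ±I₂. -/
/-- A primitive positive definite binary quadratic form of discriminant
`D ∉ {−3, −4}` has trivial proper automorphism group `{±I₂}`. -/
theorem aut_trivial_of_disc_ne (A B C : ℤ)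
    (hprim : Int.gcd A (Int.gcd B C) = 1) (hA : 0 < A)
    (hD : B ^ 2 - 4 * A * C < 0)
    (h3 : B ^ 2 - 4 * A * C ≠ -3) (h4 : B ^ 2 - 4 * A * C ≠ -4)
    (K : Matrix (Fin 2) (Fin 2) ℤ) (hdet : K.det = 1)
    (hinv : ∀ x y : ℤ,
      A * (K 0 0 * x + K 1 0 * y) ^ 2
        + B * (K 0 0 * x + K 1 0 * y) * (K 0 1 * x + K 1 1 * y)
        + C * (K 0 1 * x + K 1 1 * y) ^ 2
      = A * x ^ 2 + B * x * y + C * y ^ 2) :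
    K = 1 ∨ K = -1 := by
  set a := K 0 0 with ha
  set b := K 0 1 with hb
  set c := K 1 0 with hc
  set d := K 1 1 with hdd
  have hdet2 : a * d - b * c = 1 := by
    have := hdet
    rw [Matrix.det_fin_two] at this
    linarith [this]
  have e1 := hinv 1 0
  have e2 := hinv 0 1
  have e3 := hinv 1 1
  -- key identities
  have h2 : 2 * (A * c + C * b) = 0 := by
    linear_combination a * e3 - (a + 2 * c) * e1 - a * e2
      - (B * a + 2 * C * b) * hdet2
  have h1 : 2 * (A * (d - a) - B * b) = 0 := by
    linear_combination b * e3 - (b + 2 * d) * e1 - b * e2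
      + (2 * A * a + B * b) * hdet2
  have h2' : A * c = -(C * b) := by omega
  have h1' : A * (d - a) = B * b := by omega
  -- A divides b
  have hdvdB : A ∣ B * b := ⟨d - a, h1'.symm⟩
  have hdvdC : A ∣ C * b := by
    refine ⟨-c, ?_⟩
    linarith [h2']
  have hcop : IsCoprime A ((Int.gcd B C : ℤ)) := by
    rw [Int.isCoprime_iff_gcd_eq_one]
    simpa using hprim
  have hdvdg : A ∣ (Int.gcd B C : ℤ) * b := by
    rw [Int.gcd_eq_gcd_ab B C]
    have : (B * Int.gcdA B C + C * Int.gcdB B C) * b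
        = Int.gcdA B C * (B * b) + Int.gcdB B C * (C * b) := by ring
    rw [this]
    exact dvd_add (Dvd.dvd.mul_left hdvdB _) (Dvd.dvd.mul_left hdvdC _)
  have hAb : A ∣ b := hcop.dvd_of_dvd_mul_left hdvdg
  obtain ⟨u, hu⟩ := hAb
  -- Pell equation
  have hpell : (a + d) ^ 2 - (B ^ 2 - 4 * A * C) * u ^ 2 = 4 := by
    have hkey : A ^ 2 * ((a + d) ^ 2 - (B ^ 2 - 4 * A * C) * u ^ 2)
        = A ^ 2 * 4 := by
      linear_combination (4 * A) * e1
        + (2 * A * a + B * b + A * (a + d)) * h1'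
        + (B ^ 2 - 4 * A * C) * (b + A * u) * hu
    have hA2 : (A : ℤ) ^ 2 ≠ 0 := pow_ne_zero _ (by positivity)
    exact mul_left_cancel₀ hA2 hkey
  -- the discriminant is at most -5
  have key : ∀ D : ℤ, (∃ t, D = 4 * t ∨ D = 4 * t + 1) → D < 0 → D ≠ -3 →
      D ≠ -4 → D ≤ -5 := by
    rintro D ⟨t, ht | ht⟩ <;> omega
  have hD5 : B ^ 2 - 4 * A * C ≤ -5 := by
    refine key _ ?_ hD h3 h4
    obtain ⟨k, hk⟩ | ⟨k, hk⟩ := Int.even_or_odd B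
    · exact ⟨k ^ 2 - A * C, Or.inl (by rw [hk]; ring)⟩
    · exact ⟨k ^ 2 + k - A * C, Or.inr (by rw [hk]; ring)⟩
  -- u = 0
  have hu0 : u = 0 := by
    by_contra h
    have h1u : 1 ≤ u ^ 2 := by
      have : 0 < u ^ 2 := by positivity
      omega
    nlinarith [sq_nonneg (a + d),
      mul_nonneg (by linarith : (0:ℤ) ≤ -(B ^ 2 - 4 * A * C) - 5)
        (by linarith : (0:ℤ) ≤ u ^ 2 - 1)]
  subst hu0
  have hb0 : b = 0 := by simpa using hu
  have hc0 : c = 0 := by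
    have : A * c = 0 := by rw [h2', hb0]; ring
    have hA0 : A ≠ 0 := by positivity
    exact (mul_eq_zero.mp this).resolve_left hA0
  have had : d = a := by
    have : A * (d - a) = 0 := by rw [h1', hb0]; ring
    have hA0 : A ≠ 0 := by positivity
    have := (mul_eq_zero.mp this).resolve_left hA0
    omega
  have haa : a * a = 1 := by
    linear_combination hdet2 + c * hb0 - a * had
  have hK : K = !![a, b; c, d] := by
    ext i j; fin_cases i <;> fin_cases j <;> rfl
  have : a = 1 ∨ a = -1 := by
    rcases Int.isUnit_iff.mp (IsUnit.of_mul_eq_one a haa) with h | h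
    · exact Or.inl h
    · exact Or.inr h
  rcases this with h | h
  · left
    rw [hK, had, hb0, hc0, h]
    exact Matrix.one_fin_two.symm
  · right
    rw [hK, had, hb0, hc0, h]
    have hneg : (-1 : Matrix (Fin 2) (Fin 2) ℤ) = !![-1, 0; 0, -1] := by
      rw [Matrix.eta_fin_two (-1 : Matrix (Fin 2) (Fin 2) ℤ)]
      norm_num [Matrix.neg_apply, Matrix.one_apply]
    rw [hneg]
end

section
/- Quadratic forms with nontrivial automorphisms: Let f(x,y) = Ax² + Bxy + Cy² be an integral binary quadratic form with A > 0 and D = B² − 4AC < 0, and let r = gcd(A,B,C). If there exists K ∈ SL(2,ℤ) with K ≠ I₂ and K ≠ −I₂ such that f((x,y)K) = f(x,y) for all integers x,y, then D = −3r² or D = −4r². -/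
lemma gcd_sq' (x y : ℕ) : Nat.gcd (x^2) (y^2) = Nat.gcd x y ^ 2 := by
  rcases Nat.eq_zero_or_pos (Nat.gcd x y) with h | h
  · obtain ⟨hx, hy⟩ := Nat.gcd_eq_zero_iff.mp h
    subst hx; subst hy; simp
  · have hco := Nat.coprime_div_gcd_div_gcd h
    have hx : Nat.gcd x y * (x / Nat.gcd x y) = x := Nat.mul_div_cancel' (Nat.gcd_dvd_left x y)
    have hy : Nat.gcd x y * (y / Nat.gcd x y) = y := Nat.mul_div_cancel' (Nat.gcd_dvd_right x y)
    calc Nat.gcd (x^2) (y^2)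
        = Nat.gcd ((Nat.gcd x y)^2 * (x / Nat.gcd x y)^2)
            ((Nat.gcd x y)^2 * (y / Nat.gcd x y)^2) := by rw [← mul_pow, ← mul_pow, hx, hy]
      _ = (Nat.gcd x y)^2 * Nat.gcd ((x / Nat.gcd x y)^2) ((y / Nat.gcd x y)^2) :=
          Nat.gcd_mul_left _ _ _
      _ = (Nat.gcd x y)^2 := by rw [Nat.Coprime.gcd_eq_one (hco.pow 2 2)]; simp


lemma disc_key (A B C k b c e : ℤ) (hA : 0 < A) (hD : B^2 - 4*A*C < 0)
    (hk : k = -3 ∨ k = -4)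
    (h1 : A^2 * k = (B^2 - 4*A*C) * b^2)
    (h2 : C^2 * k = (B^2 - 4*A*C) * c^2)
    (h3 : B^2 * k = (B^2 - 4*A*C) * e^2) :
    B^2 - 4*A*C = k * (Int.gcd A (Int.gcd B C) : ℤ)^2 := by
  set rn : ℕ := Int.gcd A (Int.gcd B C) with hrn
  have hrn0 : rn ≠ 0 := by
    intro h
    exact absurd (Int.gcd_eq_zero_iff.mp h).1 hA.ne'
  have hr0 : (0:ℤ) < (rn:ℤ) := by positivity
  have hrA : (rn:ℤ) ∣ A := Int.gcd_dvd_left A (Int.gcd B C)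
  have hrBC : (rn:ℤ) ∣ (Int.gcd B C : ℤ) := Int.gcd_dvd_right A (Int.gcd B C)
  have hrB : (rn:ℤ) ∣ B := hrBC.trans (Int.gcd_dvd_left B C)
  have hrC : (rn:ℤ) ∣ C := hrBC.trans (Int.gcd_dvd_right B C)
  obtain ⟨A', hA'⟩ := hrA
  obtain ⟨B', hB'⟩ := hrB
  obtain ⟨C', hC'⟩ := hrC
  -- primitivity of A', B', C'
  have hgBC : Int.gcd B C = rn * Int.gcd B' C' := by
    rw [hB', hC', Int.gcd_mul_left]
    simp
  have hg1 : Int.gcd A' ((Int.gcd B' C' : ℤ)) = 1 := by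
    have h' : rn * 1 = rn * Int.gcd A' ((Int.gcd B' C' : ℤ)) := by
      conv_lhs => rw [mul_one, hrn, hA', hgBC]
      rw [show ((rn * Int.gcd B' C' : ℕ) : ℤ) = (rn:ℤ) * (Int.gcd B' C' : ℤ) by push_cast; ring,
        Int.gcd_mul_left]
      simp
    exact (Nat.eq_of_mul_eq_mul_left (Nat.pos_of_ne_zero hrn0) h').symm
  set D' : ℤ := B'^2 - 4*A'*C' with hD'
  have hDeq : B^2 - 4*A*C = (rn:ℤ)^2 * D' := by rw [hA', hB', hC']; ring
  have hD'neg : D' < 0 := by nlinarith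
  have hc1 : D' * b^2 = k * A'^2 := by
    have h := h1
    rw [hDeq, hA'] at h
    have : (rn:ℤ)^2 * (D' * b^2) = (rn:ℤ)^2 * (k * A'^2) := by linarith [h]
    exact mul_left_cancel₀ (by positivity) this
  have hc2 : D' * c^2 = k * C'^2 := by
    have h := h2
    rw [hDeq, hC'] at h
    have : (rn:ℤ)^2 * (D' * c^2) = (rn:ℤ)^2 * (k * C'^2) := by linarith [h]
    exact mul_left_cancel₀ (by positivity) this
  have hc3 : D' * e^2 = k * B'^2 := by
    have h := h3
    rw [hDeq, hB'] at h
    have : (rn:ℤ)^2 * (D' * e^2) = (rn:ℤ)^2 * (k * B'^2) := by linarith [h]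
    exact mul_left_cancel₀ (by positivity) this
  -- natAbs divisibilities
  have hd1 : D'.natAbs ∣ k.natAbs * A'.natAbs^2 := by
    have : D' ∣ k * A'^2 := ⟨b^2, hc1.symm⟩
    simpa [Int.natAbs_mul, Int.natAbs_pow] using Int.natAbs_dvd_natAbs.mpr this
  have hd2 : D'.natAbs ∣ k.natAbs * C'.natAbs^2 := by
    have : D' ∣ k * C'^2 := ⟨c^2, hc2.symm⟩
    simpa [Int.natAbs_mul, Int.natAbs_pow] using Int.natAbs_dvd_natAbs.mpr this
  have hd3 : D'.natAbs ∣ k.natAbs * B'.natAbs^2 := by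
    have : D' ∣ k * B'^2 := ⟨e^2, hc3.symm⟩
    simpa [Int.natAbs_dvd_natAbs, Int.natAbs_mul, Int.natAbs_pow] using Int.natAbs_dvd_natAbs.mpr this
  have hgnat : Nat.gcd A'.natAbs (Nat.gcd B'.natAbs C'.natAbs) = 1 := by
    simpa [Int.gcd] using hg1
  have hdk : D'.natAbs ∣ k.natAbs := by
    have h := Nat.dvd_gcd hd1 (Nat.dvd_gcd hd3 hd2)
    rwa [Nat.gcd_mul_left, gcd_sq', Nat.gcd_mul_left, gcd_sq', hgnat, one_pow, mul_one] at h
  have hDk : D' ∣ k := Int.natAbs_dvd_natAbs.mp hdk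
  have hmod : D' % 4 = 0 ∨ D' % 4 = 1 := by
    rcases Int.even_or_odd B' with ⟨m, hm⟩ | ⟨m, hm⟩
    · left
      have hq : D' = 4*(m^2 - A'*C') := by rw [hD', hm]; ring
      omega
    · right
      have hq : D' = 4*(m^2 + m - A'*C') + 1 := by rw [hD', hm]; ring
      omega
  have hfin : D' = k := by
    rcases hk with rfl | rfl
    · have h4 : D'.natAbs ≤ 3 := Nat.le_of_dvd (by norm_num) hdk
      omega
    · have h4 : D'.natAbs ≤ 4 := Nat.le_of_dvd (by norm_num) hdk
      have hne : D' ≠ -3 := by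
        intro heq
        rw [heq] at hDk
        norm_num at hDk
      omega
  rw [hDeq, hfin]; ring


/-- If a positive definite integral binary quadratic form `Ax²+Bxy+Cy²` with
content `r = gcd(A,B,C)` admits a proper automorphism other than `±I₂`, then its
discriminant is `−3r²` or `−4r²`. -/
theorem nontrivial_aut_disc (A B C : ℤ) (hA : 0 < A)
    (hD : B ^ 2 - 4 * A * C < 0)
    (K : Matrix (Fin 2) (Fin 2) ℤ) (hdet : K.det = 1)
    (hK1 : K ≠ 1) (hK2 : K ≠ -1)
    (hinv : ∀ x y : ℤ,
      A * (K 0 0 * x + K 1 0 * y) ^ 2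
        + B * (K 0 0 * x + K 1 0 * y) * (K 0 1 * x + K 1 1 * y)
        + C * (K 0 1 * x + K 1 1 * y) ^ 2
      = A * x ^ 2 + B * x * y + C * y ^ 2) :
    B ^ 2 - 4 * A * C = -3 * (Int.gcd A (Int.gcd B C) : ℤ) ^ 2 ∨
    B ^ 2 - 4 * A * C = -4 * (Int.gcd A (Int.gcd B C) : ℤ) ^ 2 := by
  rw [Matrix.det_fin_two] at hdet
  set a := K 0 0 with ha
  set b := K 0 1 with hb
  set c := K 1 0 with hc
  set d := K 1 1 with hd
  have e1 := hinv 1 0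
  have e2 := hinv 0 1
  have e3 := hinv 1 1
  have h1 : A * a + B * b = A * d := by
    have h : 2 * (A * a + B * b) = 2 * (A * d) := by
      linear_combination (2*d + b) * e1 + b * e2 - b * e3 - (2*A*a + B*b) * hdet
    linarith
  have h3 : C * a = C * d + B * c := by
    have h : 2 * (C * a) = 2 * (C * d + B * c) := by
      linear_combination (-c) * e1 + (-c - 2*a) * e2 + c * e3 + (B*c + 2*C*d) * hdet
    linarith
  have ID1 : A^2 * ((a+d)^2 - 4) = (B^2 - 4*A*C) * b^2 := by
    linear_combination (-(A*(a+d)) - 2*A*a - B*b) * h1 + 4*A*e1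
  have ID2 : C^2 * ((a+d)^2 - 4) = (B^2 - 4*A*C) * c^2 := by
    linear_combination (C*(a+d) + 2*C*d + B*c) * h3 + 4*C*e2
  have ID3 : A^2 * (B^2 * ((a+d)^2 - 4)) = A^2 * ((B^2 - 4*A*C) * (d-a)^2) := by
    linear_combination (B^2 - 4*A*C) * (A*(d-a) + B*b) * h1 + B^2 * ID1
  have ID3' : B^2 * ((a+d)^2 - 4) = (B^2 - 4*A*C) * (d-a)^2 :=
    mul_left_cancel₀ (pow_ne_zero 2 hA.ne') ID3
  have hk0 : (a+d)^2 - 4 ≤ 0 := by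
    have hb2 : (B^2 - 4*A*C) * b^2 ≤ 0 := mul_nonpos_of_nonpos_of_nonneg hD.le (sq_nonneg b)
    nlinarith [sq_nonneg (a+d)]
  by_cases hkz : (a+d)^2 - 4 = 0
  · -- trivial automorphism case: contradiction
    exfalso
    have hb0 : b = 0 := by
      have h : (B^2 - 4*A*C) * b^2 = 0 := by rw [← ID1, hkz]; ring
      rcases mul_eq_zero.mp h with h | h
      · exact absurd h (by linarith)
      · exact pow_eq_zero_iff (n := 2) (by norm_num) |>.mp h
    have hc0 : c = 0 := by
      have h : (B^2 - 4*A*C) * c^2 = 0 := by rw [← ID2, hkz]; ring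
      rcases mul_eq_zero.mp h with h | h
      · exact absurd h (by linarith)
      · exact pow_eq_zero_iff (n := 2) (by norm_num) |>.mp h
    have had : a * d = 1 := by rw [hb0, hc0] at hdet; linarith
    rcases Int.mul_eq_one_iff_eq_one_or_neg_one.mp had with ⟨ha1, hd1⟩ | ⟨ha1, hd1⟩
    · apply hK1
      rw [Matrix.eta_fin_two K, ← ha, ← hb, ← hc, ← hd, ha1, hb0, hc0, hd1,
        Matrix.one_fin_two]
    · apply hK2
      rw [Matrix.eta_fin_two K, ← ha, ← hb, ← hc, ← hd, ha1, hb0, hc0, hd1]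
      have hm : (-1 : Matrix (Fin 2) (Fin 2) ℤ) = !![-1,0;0,-1] := by
        rw [Matrix.eta_fin_two (-1 : Matrix (Fin 2) (Fin 2) ℤ)]
        norm_num
      rw [hm]
  · have hklt : (a+d)^2 - 4 < 0 := lt_of_le_of_ne hk0 hkz
    have habs : |a + d| < 2 := by
      have h4 : (a+d)^2 < 2^2 := by linarith
      exact abs_lt_of_sq_lt_sq h4 (by norm_num)
    rw [abs_lt] at habs
    obtain ⟨ht1, ht2⟩ := habs
    have htv : a + d = -1 ∨ a + d = 0 ∨ a + d = 1 := by omega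
    have hk : (a+d)^2 - 4 = -3 ∨ (a+d)^2 - 4 = -4 := by
      rcases htv with h | h | h <;> rw [h] <;> norm_num
    have hmain := disc_key A B C ((a+d)^2 - 4) b c (d - a) hA hD hk ID1 ID2 ID3'
    rcases hk with h | h
    · left
      rw [hmain, h]
    · right
      rw [hmain, h]
end

section
/- Forms of discriminant −3 and congruence subgroups of even level: Let f(x,y) = Ax² + Bxy + Cy² be an integral binary quadratic form with discriminant B² − 4AC = −3. Then A, B and C are all odd. Consequently, if N is an even positive integer and K = [[α,β],[γ,δ]] ∈ SL(2,ℤ) satisfies N ∣ γ and f((x,y)K) = f(x,y) for all integers x,y, then K = I₂ or K = −I₂. -/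
/-- For a form of discriminant `−3` all coefficients are odd; hence any proper
automorphism lying in `Γ₀(N)` with `N` even and positive is `±I₂`. -/
theorem disc_neg_three_odd_coeffs_and_gamma0 (A B C : ℤ)
    (hdisc : B ^ 2 - 4 * A * C = -3) :
    Odd A ∧ Odd B ∧ Odd C ∧
    ∀ N : ℕ, 0 < N → Even N →
      ∀ K : Matrix (Fin 2) (Fin 2) ℤ, K.det = 1 → (N : ℤ) ∣ K 1 0 →
        (∀ x y : ℤ,
          A * (K 0 0 * x + K 1 0 * y) ^ 2
            + B * (K 0 0 * x + K 1 0 * y) * (K 0 1 * x + K 1 1 * y)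
            + C * (K 0 1 * x + K 1 1 * y) ^ 2
          = A * x ^ 2 + B * x * y + C * y ^ 2) →
        K = 1 ∨ K = -1 := by
  -- B is odd
  have hBodd : Odd B := by
    rcases Int.even_or_odd B with hB | hB
    · exfalso
      obtain ⟨k, hk⟩ := hB
      have h4 : 4 * (k * k) - 4 * (A * C) = -3 := by
        subst hk; linear_combination hdisc
      generalize k * k = n at h4
      generalize A * C = m at h4
      omega
    · exact hB
  -- A*C is odd, hence A and C are odd
  obtain ⟨k, hk⟩ := hBodd
  have hkk : Even (k * (k + 1)) := Int.even_mul_succ_self k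
  obtain ⟨j, hj⟩ := hkk
  have hAC4 : 4 * (A * C) = 4 * (2 * j + 1) := by
    subst hk; linear_combination -hdisc + 4 * hj
  have hACodd : Odd (A * C) := ⟨j, by linarith only [hAC4]⟩
  obtain ⟨hAodd, hCodd⟩ := Int.odd_mul.mp hACodd
  have hA0 : A ≠ 0 := by
    rintro rfl; obtain ⟨m, hm⟩ := hAodd; omega
  have hB0 : B ≠ 0 := by
    rintro rfl; omega
  refine ⟨hAodd, ⟨k, hk⟩, hCodd, ?_⟩
  intro N hNpos hNeven K hdet hdvd hinv
  set a := K 0 0 with ha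
  set b := K 0 1 with hb
  set c := K 1 0 with hc
  set d := K 1 1 with hd
  rw [Matrix.det_fin_two] at hdet
  have h4 : a * d - b * c = 1 := hdet
  have e1 : A * a ^ 2 + B * a * b + C * b ^ 2 = A := by linear_combination hinv 1 0
  have e2 : A * c ^ 2 + B * c * d + C * d ^ 2 = C := by linear_combination hinv 0 1
  have e3 : 2 * A * a * c + B * (a * d + b * c) + 2 * C * b * d = B := by
    linear_combination hinv 1 1 - hinv 1 0 - hinv 0 1
  have hP2 : 2 * B * C * a - B ^ 2 * c + 4 * C ^ 2 * b - 2 * B * C * d = -3 * c := by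
    linear_combination (-4 * C * c) * e1 + (-2 * B * a) * e2 + (B * c + 2 * C * a) * e3
      + c * hdisc + (-(2 * B * C * a - B ^ 2 * c + 4 * C ^ 2 * b - 2 * B * C * d)) * h4
  have hP3 : -2 * A * B * a + 4 * A ^ 2 * c - B ^ 2 * b + 2 * A * B * d = -3 * b := by
    linear_combination (-2 * B * d) * e1 + (-4 * A * b) * e2 + (2 * A * d + B * b) * e3
      + b * hdisc + (-(-2 * A * B * a + 4 * A ^ 2 * c - B ^ 2 * b + 2 * A * B * d)) * h4
  have h6 : 6 * (A * c + C * b) = 0 := by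
    linear_combination A * hP2 + C * hP3 + (A * c + C * b) * hdisc
  have hT1 : A * c = -(C * b) := by linarith only [h6]
  have hT2two : 2 * (A * B * (a - d)) = 2 * (4 * A ^ 2 * c + 3 * b) := by
    linear_combination (-1) * hP3 + (-b) * hdisc + (-4 * A) * hT1
  have hT2 : A * B * (a - d) = 4 * A ^ 2 * c + 3 * b := by linarith only [hT2two]
  have hT4 : A * B * (a - d) = -(B ^ 2 * b) := by
    linear_combination hT2 + b * hdisc + 4 * A * hT1
  have hT5 : A * (a - d) = -(B * b) := by
    have h : B * (A * (a - d)) = B * (-(B * b)) := by linear_combination hT4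
    exact mul_left_cancel₀ hB0 h
  have hE : A ^ 2 * ((a + d) ^ 2 - 4) = -3 * b ^ 2 := by
    linear_combination (A * (a - d) - B * b) * hT5 + 4 * A ^ 2 * h4 + 4 * A * b * hT1
      + b ^ 2 * hdisc
  -- parity of the entries
  have hceven : Even c := by
    obtain ⟨m, hm⟩ := hNeven
    obtain ⟨t, ht⟩ := hdvd
    exact ⟨m * t, by push_cast [hm] at ht; linarith only [ht]⟩
  obtain ⟨c', hc'⟩ := hceven
  have hadodd : Odd (a * d) := ⟨b * c', by linear_combination h4 + b * hc'⟩
  obtain ⟨haodd, hdodd⟩ := Int.odd_mul.mp hadodd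
  have hts : Even (a + d) := haodd.add_odd hdodd
  obtain ⟨s, hs⟩ := hts
  have hbeven : Even b := by
    have had : Even (a - d) := haodd.sub_odd hdodd
    obtain ⟨w, hw⟩ := had
    have hBb : Even (B * b) := ⟨-(A * w), by linear_combination hT5 - A * hw⟩
    rcases Int.even_mul.mp hBb with h | h
    · obtain ⟨u, hu⟩ := h; omega
    · exact h
  obtain ⟨b', hb'⟩ := hbeven
  have hKey4 : 4 * (A ^ 2 * s ^ 2 + 3 * b' ^ 2) = 4 * A ^ 2 := by
    linear_combination hE - (A ^ 2 * (a + d + s + s)) * hs - (3 * (b + b' + b')) * hb'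
  have hKey : A ^ 2 * s ^ 2 + 3 * b' ^ 2 = A ^ 2 := by linarith only [hKey4]
  have hA2 : 1 ≤ A ^ 2 := by
    have h0 : 0 < A ^ 2 := by positivity
    linarith only [h0]
  by_cases hb0 : b' = 0
  · -- b = 0, hence c = 0, a = d, a^2 = 1
    have hbz : b = 0 := by omega
    have hcz : c = 0 := by
      have h : A * c = 0 := by rw [hT1, hbz]; ring
      exact (mul_eq_zero.mp h).resolve_left hA0
    have had : a = d := by
      have h : A * (a - d) = 0 := by rw [hT5, hbz]; ring
      have h2 := (mul_eq_zero.mp h).resolve_left hA0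
      linarith only [h2]
    have ha1 : a * a = 1 := by linear_combination h4 + a * had + c * hbz
    rcases Int.eq_one_or_neg_one_of_mul_eq_one ha1 with h1 | h1
    · left
      ext i j
      fin_cases i <;> fin_cases j <;>
        simp [Matrix.one_apply, ← ha, ← hb, ← hc, ← hd, h1, hbz, hcz, ← had]
    · right
      ext i j
      fin_cases i <;> fin_cases j <;>
        simp [Matrix.neg_apply, Matrix.one_apply, ← ha, ← hb, ← hc, ← hd, h1, hbz, hcz, ← had]
  · exfalso
    have hb2 : 1 ≤ b' ^ 2 := by
      have h0 : 0 < b' ^ 2 := by positivity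
      linarith only [h0]
    have hs0 : s = 0 := by
      by_contra hs0
      have h1 : 1 ≤ s ^ 2 := by
        have h0 : 0 < s ^ 2 := by positivity
        linarith only [h0]
      have hprod : A ^ 2 * 1 ≤ A ^ 2 * s ^ 2 :=
        mul_le_mul_of_nonneg_left h1 (sq_nonneg A)
      linarith only [hKey, hprod, hb2, hA2]
    have h3sq : A ^ 2 = 3 * b' ^ 2 := by rw [hs0] at hKey; linarith only [hKey]
    -- A odd: A^2 ≡ 1 mod 8; but 3*b'^2 mod 8 ∈ {0,3,4}
    obtain ⟨m, hm⟩ := hAodd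
    have hmm : Even (m * (m + 1)) := Int.even_mul_succ_self m
    obtain ⟨p, hp⟩ := hmm
    have hA8 : A ^ 2 = 8 * p + 1 := by subst hm; linear_combination 4 * hp
    rcases Int.even_or_odd b' with hbe | hbo
    · obtain ⟨e, he⟩ := hbe
      have hcontra : 8 * p + 1 = 12 * (e * e) := by
        rw [← hA8, h3sq, he]; ring
      generalize e * e = n at hcontra
      omega
    · obtain ⟨q, hq⟩ := hbo
      have hqq : Even (q * (q + 1)) := Int.even_mul_succ_self q
      obtain ⟨r, hr⟩ := hqq
      have hcontra : 8 * p + 1 = 24 * r + 3 := by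
        rw [← hA8, h3sq, hq]; linear_combination 12 * hr
      omega
end

section
/- Reduced forms of discriminant −16: Every integral binary quadratic form f(x,y) = Ax² + Bxy + Cy² with A > 0 and discriminant B² − 4AC = −16 is properly equivalent (i.e. equal to f·g for some g ∈ SL(2,ℤ)) to exactly one of the two forms x² + 4y² and 2x² + 2y²; these two forms are not properly equivalent to each other. -/
/-- Proper equivalence of integral binary quadratic forms: `A'x²+B'xy+C'y²` is the
transform of `Ax²+Bxy+Cy²` by some `[[α,β],[γ,δ]] ∈ SL(2,ℤ)` acting by
`(x,y) ↦ (x,y)·g`, i.e. `A'x²+B'xy+C'y² = A(αx+γy)² + B(αx+γy)(βx+δy) + C(βx+δy)²`. -/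
def ProperEquiv (A B C A' B' C' : ℤ) : Prop :=
  ∃ α β γ δ : ℤ, α * δ - β * γ = 1 ∧
    ∀ x y : ℤ,
      A' * x ^ 2 + B' * x * y + C' * y ^ 2
        = A * (α * x + γ * y) ^ 2 + B * (α * x + γ * y) * (β * x + δ * y)
          + C * (β * x + δ * y) ^ 2

lemma pe_translate (A B C m : ℤ) :
    ProperEquiv A B C A (B + 2 * m * A) (A * m ^ 2 + B * m + C) :=
  ⟨1, 0, m, 1, by ring, fun x y => by ring⟩

lemma pe_swap (A B C : ℤ) : ProperEquiv A B C C (-B) A :=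
  ⟨0, -1, 1, 0, by ring, fun x y => by ring⟩

lemma pe_trans {A B C D E F G H I : ℤ} (h1 : ProperEquiv A B C D E F)
    (h2 : ProperEquiv D E F G H I) : ProperEquiv A B C G H I := by
  obtain ⟨a1, b1, c1, d1, e1, f1⟩ := h1
  obtain ⟨a2, b2, c2, d2, e2, f2⟩ := h2
  refine ⟨a1 * a2 + c1 * b2, b1 * a2 + d1 * b2, a1 * c2 + c1 * d2, b1 * c2 + d1 * d2,
    by linear_combination (a2 * d2 - b2 * c2) * e1 + e2, fun x y => ?_⟩
  rw [f2 x y, f1]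
  ring

lemma pe_symm {A B C D E F : ℤ} (h : ProperEquiv A B C D E F) : ProperEquiv D E F A B C := by
  obtain ⟨a, b, c, d, e, f⟩ := h
  refine ⟨d, -b, -c, a, by linear_combination e, fun x y => ?_⟩
  have h := f (d * x - c * y) (-b * x + a * y)
  have e1 : a * (d * x - c * y) + c * (-b * x + a * y) = x := by linear_combination x * e
  have e2 : b * (d * x - c * y) + d * (-b * x + a * y) = y := by linear_combination y * e
  rw [e1, e2] at h
  linear_combination -h

lemma reduce : ∀ n : ℕ, ∀ A B C : ℤ, A ≤ (n : ℤ) → 0 < A → B ^ 2 - 4 * A * C = -16 →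
    ProperEquiv A B C 1 0 4 ∨ ProperEquiv A B C 2 0 2 := by
  intro n
  induction n with
  | zero => intro A B C h hA _; exfalso; omega
  | succ n ih =>
    intro A B C hle hA hd
    obtain ⟨m, hm⟩ : ∃ m : ℤ, m = -((B + A) / (2 * A)) := ⟨_, rfl⟩
    obtain ⟨B₀, hB0⟩ : ∃ b : ℤ, b = B + 2 * m * A := ⟨_, rfl⟩
    obtain ⟨C₀, hC0⟩ : ∃ c : ℤ, c = A * m ^ 2 + B * m + C := ⟨_, rfl⟩
    have hT : ProperEquiv A B C A B₀ C₀ := by rw [hB0, hC0]; exact pe_translate A B C m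
    have e := Int.emod_add_mul_ediv (B + A) (2 * A)
    have r0 : 0 ≤ (B + A) % (2 * A) := Int.emod_nonneg _ (by positivity)
    have r1 : (B + A) % (2 * A) < 2 * A := Int.emod_lt_of_pos _ (by linarith)
    have hb1 : -A ≤ B₀ := by rw [hB0, hm]; linarith [e]
    have hb2 : B₀ < A := by rw [hB0, hm]; linarith [e]
    have hd0 : B₀ ^ 2 - 4 * A * C₀ = -16 := by rw [hB0, hC0]; linear_combination hd
    have hC0pos : 0 < C₀ := by nlinarith [sq_nonneg B₀]
    rcases lt_or_ge C₀ A with hlt | hge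
    · have hd1 : (-B₀) ^ 2 - 4 * C₀ * A = -16 := by linear_combination hd0
      have hrec := ih C₀ (-B₀) A (by omega) hC0pos hd1
      rcases hrec with h | h
      · exact Or.inl (pe_trans hT (pe_trans (pe_swap A B₀ C₀) h))
      · exact Or.inr (pe_trans hT (pe_trans (pe_swap A B₀ C₀) h))
    · clear hm hB0 hC0 e r0 r1 hd hle
      have k1 : B₀ * B₀ ≤ A * A := by nlinarith
      have k2 : A * A ≤ A * C₀ := by nlinarith
      have k4 : 3 * (A * C₀) ≤ 16 := by nlinarith
      have k5 : A * C₀ ≤ 5 := by nlinarith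
      have k7 : A ≤ 2 := by nlinarith
      have hclass : (A = 1 ∧ B₀ = 0 ∧ C₀ = 4) ∨ (A = 2 ∧ B₀ = 0 ∧ C₀ = 2) := by
        clear k1 k2 k4 hT
        interval_cases A <;> interval_cases B₀ <;> norm_num at hd0 ⊢ <;> omega
      rcases hclass with ⟨h1, h2, h3⟩ | ⟨h1, h2, h3⟩
      · subst h1; rw [h2, h3] at hT; exact Or.inl hT
      · subst h1; rw [h2, h3] at hT; exact Or.inr hT

/-- Every positive definite integral binary quadratic form of discriminant `−16`
is properly equivalent to exactly one of `x²+4y²` and `2x²+2y²`; and these two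
forms are not properly equivalent to each other. -/
theorem reduced_forms_disc_neg_sixteen :
    (∀ A B C : ℤ, 0 < A → B ^ 2 - 4 * A * C = -16 →
      Xor' (ProperEquiv A B C 1 0 4) (ProperEquiv A B C 2 0 2)) ∧
    ¬ ProperEquiv 1 0 4 2 0 2 := by
  have hne : ¬ ProperEquiv 1 0 4 2 0 2 := by
    rintro ⟨a, b, c, d, e, f⟩
    have h := f 1 0
    norm_num at h
    have hb2 : 4 * b ^ 2 ≤ 2 := by nlinarith [sq_nonneg a]
    have hb : b ^ 2 = 0 := by nlinarith [sq_nonneg b]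
    have hb' : b = 0 := by
      have := pow_eq_zero_iff (n := 2) (by norm_num) |>.mp hb
      exact this
    subst hb'
    norm_num at h
    have h1 : a ≤ 1 := by nlinarith
    have h2 : -1 ≤ a := by nlinarith
    interval_cases a <;> norm_num at h
  refine ⟨fun A B C hA hd => ?_, hne⟩
  rcases reduce A.toNat A B C (by omega) hA hd with h | h
  · exact Or.inl ⟨h, fun h2 => hne (pe_trans (pe_symm h) h2)⟩
  · exact Or.inr ⟨h, fun h2 => hne (pe_trans (pe_symm h2) h)⟩
end
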